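/- Suppose p_0 > max(p_1,...,p_κ). Then the Markov chain SΓ_t = (m_1(Γ_t),...,m_κ(Γ_t)) recording ball multiplicities of the infinite-capacity carrier process over the i.i.d. configuration X^p is irreducible and aperiodic, and the product-geometric distribution π(n_1,...,n_κ) = ∏_{i=1}^κ (1 − p_i/p_0)(p_i/p_0)^{n_i} on (ℤ_{≥0})^κ is its unique stationary distribution. -/

import Mathlib

/-- Decrement the count at the largest index of the finset `s` (if `s` is nonempty). -/
noncomputable def dec1 {κ : ℕ} (m : Fin κ → ℕ) (s : Finset (Fin κ)) : Fin κ → ℕ := by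
  classical
  exact if h : s.Nonempty then Function.update m (s.max' h) (m (s.max' h) - 1) else m

/-- Transition of the multiplicity chain `SΓ` of the infinite-capacity carrier: index
`i : Fin κ` records the number of balls of color `i+1` in the carrier.  An incoming empty
box (`none`) ejects a ball of the largest color present; an incoming ball of color `j+1`
(`some j`) enters the carrier and ejects a ball of the largest color `< j+1` present
(nothing is ejected if there is none). -/
noncomputable def carTrans {κ : ℕ} (m : Fin κ → ℕ) : Option (Fin κ) → (Fin κ → ℕ)
  | none => by
      classical
      exact dec1 m (Finset.univ.filter fun i => 0 < m i)
  | some j => by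
      classical
      exact dec1 (Function.update m j (m j + 1))
        (Finset.univ.filter fun i => i < j ∧ 0 < m i)

/-- The probability of the incoming symbol: `p 0` for an empty box, `p (i+1)` for a ball of
color `i+1`. -/
noncomputable def pOf {κ : ℕ} (p : Fin (κ + 1) → ℝ) : Option (Fin κ) → ℝ
  | none => p 0
  | some i => p i.succ

/-- The one-step transition kernel of the multiplicity chain. -/
noncomputable def carK {κ : ℕ} (p : Fin (κ + 1) → ℝ) (m m' : Fin κ → ℕ) : ℝ := by
  classical
  exact ∑ y : Option (Fin κ), if carTrans m y = m' then pOf p y else 0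

/-- The `t`-step transition kernel of the multiplicity chain. -/
noncomputable def carKpow {κ : ℕ} (p : Fin (κ + 1) → ℝ) :
    ℕ → (Fin κ → ℕ) → (Fin κ → ℕ) → ℝ
  | 0, m, m' => by
      classical
      exact if m = m' then 1 else 0
  | t + 1, m, m' => ∑' z : Fin κ → ℕ, carKpow p t m z * carK p z m'

/-- The product-geometric distribution `π(n_1,…,n_κ) = ∏ (1 - p_i/p_0)(p_i/p_0)^{n_i}`. -/
noncomputable def carPi {κ : ℕ} (p : Fin (κ + 1) → ℝ) (m : Fin κ → ℕ) : ℝ :=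
  ∏ i : Fin κ, (1 - p i.succ / p 0) * (p i.succ / p 0) ^ (m i)

open Finset Function

namespace S14

variable {κ : ℕ}

/-- add one ball at index `j` -/
noncomputable def bump (m : Fin κ → ℕ) (j : Fin κ) : Fin κ → ℕ :=
  Function.update m j (m j + 1)

/-- remove one ball at index `j` (truncated) -/
noncomputable def drop (m : Fin κ → ℕ) (j : Fin κ) : Fin κ → ℕ :=
  Function.update m j (m j - 1)

lemma bump_apply (m : Fin κ → ℕ) (j i : Fin κ) :
    bump m j i = if i = j then m j + 1 else m i := by
  simp [bump, Function.update]

lemma drop_apply (m : Fin κ → ℕ) (j i : Fin κ) :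
    drop m j i = if i = j then m j - 1 else m i := by
  simp [drop, Function.update]

lemma bump_inj (m : Fin κ → ℕ) : Function.Injective (bump m) := by
  intro i j h
  by_contra hij
  have h1 := congrFun h i
  rw [bump_apply, bump_apply, if_pos rfl, if_neg hij] at h1
  omega

lemma bump_ne (m : Fin κ → ℕ) (j : Fin κ) : bump m j ≠ m := by
  intro h
  have := congrFun h j
  rw [bump_apply, if_pos rfl] at this
  omega

lemma bump_drop (m : Fin κ → ℕ) (j : Fin κ) (h : 0 < m j) : bump (drop m j) j = m := by
  funext i
  simp only [bump_apply, drop_apply]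
  by_cases hij : i = j
  · subst hij; simp; omega
  · rw [if_neg hij, if_neg hij]

lemma dec1_le (m : Fin κ → ℕ) (s : Finset (Fin κ)) (i : Fin κ) : dec1 m s i ≤ m i := by
  unfold dec1
  split
  · rw [Function.update_apply]
    split
    · rename_i he; subst he; omega
    · exact le_refl _
  · exact le_refl _

lemma dec1_ge (m : Fin κ → ℕ) (s : Finset (Fin κ)) (i : Fin κ) : m i - 1 ≤ dec1 m s i := by
  unfold dec1
  split
  · rw [Function.update_apply]
    split
    · rename_i he; subst he; omega
    · omega
  · omega

lemma carTrans_le (m : Fin κ → ℕ) (y : Option (Fin κ)) (i : Fin κ) :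
    carTrans m y i ≤ m i + 1 := by
  cases y with
  | none =>
      have := dec1_le m (Finset.univ.filter fun i => 0 < m i) i
      simp only [carTrans]
      omega
  | some j =>
      have := dec1_le (Function.update m j (m j + 1))
        (Finset.univ.filter fun i => i < j ∧ 0 < m i) i
      have h2 : Function.update m j (m j + 1) i ≤ m i + 1 := by
        rw [Function.update_apply]; split
        · rename_i he; subst he; omega
        · omega
      simp only [carTrans]
      omega

lemma carTrans_ge (m : Fin κ → ℕ) (y : Option (Fin κ)) (i : Fin κ) :
    m i - 1 ≤ carTrans m y i := by
  cases y with
  | none =>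
      have := dec1_ge m (Finset.univ.filter fun i => 0 < m i) i
      simp only [carTrans]
      omega
  | some j =>
      have := dec1_ge (Function.update m j (m j + 1))
        (Finset.univ.filter fun i => i < j ∧ 0 < m i) i
      have h2 : m i ≤ Function.update m j (m j + 1) i := by
        rw [Function.update_apply]; split
        · rename_i he; subst he; omega
        · omega
      simp only [carTrans]
      omega


lemma dec1_of_empty (m : Fin κ → ℕ) (s : Finset (Fin κ)) (h : ¬ s.Nonempty) : dec1 m s = m :=
  dif_neg h

lemma dec1_of_nonempty (m : Fin κ → ℕ) (s : Finset (Fin κ)) (h : s.Nonempty) :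
    dec1 m s = Function.update m (s.max' h) (m (s.max' h) - 1) := dif_pos h

lemma carTrans_none_def (m : Fin κ → ℕ) :
    carTrans m none = dec1 m (Finset.univ.filter fun i => 0 < m i) := rfl

lemma carTrans_some_def (m : Fin κ → ℕ) (j : Fin κ) :
    carTrans m (some j) = dec1 (Function.update m j (m j + 1))
      (Finset.univ.filter fun i => i < j ∧ 0 < m i) := rfl

lemma carTrans_none_zero (m : Fin κ → ℕ) (h : ∀ i, m i = 0) : carTrans m none = m := by
  rw [carTrans_none_def, dec1_of_empty]
  rintro ⟨i, hi⟩
  simp only [mem_filter, mem_univ, true_and] at hi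
  rw [h i] at hi; omega

lemma carTrans_none_bump (m' : Fin κ → ℕ) (j : Fin κ) (hj : ∀ i, j < i → m' i = 0) :
    carTrans (bump m' j) none = m' := by
  set s : Finset (Fin κ) := Finset.univ.filter fun i => 0 < bump m' j i with hs
  have hjs : j ∈ s := by
    rw [hs, mem_filter]
    refine ⟨mem_univ j, ?_⟩
    rw [bump_apply, if_pos rfl]
    omega
  have hne : s.Nonempty := ⟨j, hjs⟩
  have hmax : s.max' hne = j := by
    apply le_antisymm
    · apply Finset.max'_le
      intro x hx
      simp only [hs, mem_filter, mem_univ, true_and] at hx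
      by_contra hxj
      push_neg at hxj
      rw [bump_apply, if_neg (by intro h; rw [h] at hxj; exact lt_irrefl _ hxj), hj x hxj] at hx
      omega
    · exact Finset.le_max' s j hjs
  rw [carTrans_none_def, ← hs, dec1_of_nonempty _ _ hne, hmax]
  funext x
  rw [Function.update_apply]
  by_cases hxj : x = j
  · rw [if_pos hxj, hxj, bump_apply, if_pos rfl]; omega
  · rw [if_neg hxj, bump_apply, if_neg hxj]

lemma carTrans_none_inv (m m' : Fin κ → ℕ) (h : carTrans m none = m') :
    (m = m' ∧ ∀ i, m' i = 0) ∨ ∃ j, (∀ i, j < i → m' i = 0) ∧ m = bump m' j := by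
  by_cases hz : ∀ i, m i = 0
  · left
    rw [carTrans_none_zero m hz] at h
    exact ⟨h, h ▸ hz⟩
  · right
    push_neg at hz
    set s : Finset (Fin κ) := Finset.univ.filter fun i => 0 < m i with hs
    have hne : s.Nonempty := by
      obtain ⟨i, hi⟩ := hz
      refine ⟨i, ?_⟩
      simp only [hs, mem_filter, mem_univ, true_and]
      omega
    set T := s.max' hne with hT
    have hTs : T ∈ s := Finset.max'_mem s hne
    have hmT : 0 < m T := by simpa [hs] using hTs
    rw [carTrans_none_def, ← hs, dec1_of_nonempty _ _ hne, ← hT] at h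
    refine ⟨T, ?_, ?_⟩
    · intro i hi
      have hiT : i ≠ T := fun he => by rw [he] at hi; exact lt_irrefl _ hi
      have : m i = 0 := by
        by_contra hmi
        have : i ∈ s := by simp [hs]; omega
        exact absurd (Finset.le_max' s i this) (not_le.mpr hi)
      rw [← h, Function.update_apply, if_neg hiT, this]
    · funext x
      rw [bump_apply]
      by_cases hxT : x = T
      · rw [if_pos hxT, ← h, Function.update_apply, if_pos rfl, hxT]; omega
      · rw [if_neg hxT, ← h, Function.update_apply, if_neg hxT]

lemma carTrans_some_j (m : Fin κ → ℕ) (j : Fin κ) : carTrans m (some j) j = m j + 1 := by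
  rw [carTrans_some_def]
  set s : Finset (Fin κ) := Finset.univ.filter fun i => i < j ∧ 0 < m i with hs
  by_cases hne : s.Nonempty
  · rw [dec1_of_nonempty _ _ hne]
    have : s.max' hne < j := by
      have := Finset.max'_mem s hne
      simp only [hs, mem_filter, mem_univ, true_and] at this
      exact this.1
    rw [Function.update_apply, if_neg (by intro he; rw [← he] at this; exact lt_irrefl _ this),
      Function.update_apply, if_pos rfl]
  · rw [dec1_of_empty _ _ hne, Function.update_apply, if_pos rfl]

lemma carTrans_some_nolow (m : Fin κ → ℕ) (j : Fin κ) (h : ∀ i, i < j → m i = 0) :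
    carTrans m (some j) = bump m j := by
  rw [carTrans_some_def, dec1_of_empty]
  · rfl
  rintro ⟨i, hi⟩
  simp only [mem_filter, mem_univ, true_and] at hi
  rw [h i hi.1] at hi
  exact absurd hi.2 (lt_irrefl 0)

lemma carTrans_some_drop (m' : Fin κ → ℕ) (j : Fin κ) (hj : 0 < m' j)
    (h0 : ∀ i, i < j → m' i = 0) : carTrans (drop m' j) (some j) = m' := by
  rw [carTrans_some_nolow]
  · exact bump_drop m' j hj
  · intro i hi
    rw [drop_apply, if_neg (by intro he; rw [he] at hi; exact lt_irrefl _ hi)]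
    exact h0 i hi

lemma carTrans_some_swap (m' : Fin κ → ℕ) (i j : Fin κ) (hij : i < j) (hj : 0 < m' j)
    (hgap : ∀ i', i < i' → i' < j → m' i' = 0) :
    carTrans (bump (drop m' j) i) (some j) = m' := by
  have hijne : i ≠ j := fun he => by rw [he] at hij; exact lt_irrefl _ hij
  set b : Fin κ → ℕ := bump (drop m' j) i with hb
  have hbi : b i = m' i + 1 := by rw [hb, bump_apply, if_pos rfl, drop_apply, if_neg hijne]
  have hbj : b j = m' j - 1 := by
    rw [hb, bump_apply, if_neg (Ne.symm hijne), drop_apply, if_pos rfl]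
  have hbx : ∀ x, x ≠ i → x ≠ j → b x = m' x := by
    intro x hxi hxj
    rw [hb, bump_apply, if_neg hxi, drop_apply, if_neg hxj]
  set s : Finset (Fin κ) := Finset.univ.filter fun x => x < j ∧ 0 < b x with hs
  have his : i ∈ s := by
    simp only [hs, mem_filter, mem_univ, true_and]
    rw [hbi]; exact ⟨hij, by omega⟩
  have hne : s.Nonempty := ⟨i, his⟩
  have hmax : s.max' hne = i := by
    apply le_antisymm
    · apply Finset.max'_le
      intro x hx
      simp only [hs, mem_filter, mem_univ, true_and] at hx
      by_contra hxi
      push_neg at hxi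
      have hxine : x ≠ i := fun he => by rw [he] at hxi; exact lt_irrefl _ hxi
      have hxjne : x ≠ j := fun he => by rw [he] at hx; exact absurd hx.1 (lt_irrefl _)
      rw [hbx x hxine hxjne, hgap x hxi hx.1] at hx
      exact absurd hx.2 (lt_irrefl 0)
    · exact Finset.le_max' s i his
  rw [carTrans_some_def, ← hs, dec1_of_nonempty _ _ hne, hmax]
  funext x
  rw [Function.update_apply]
  by_cases hxi : x = i
  · rw [if_pos hxi, Function.update_apply, if_neg hijne, hbi, hxi]; omega
  · rw [if_neg hxi, Function.update_apply]
    by_cases hxj : x = j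
    · rw [if_pos hxj, hbj, hxj]; omega
    · rw [if_neg hxj]; exact hbx x hxi hxj

lemma carTrans_some_inv (m m' : Fin κ → ℕ) (j : Fin κ) (h : carTrans m (some j) = m') :
    (0 < m' j ∧ (∀ i, i < j → m' i = 0) ∧ m = drop m' j) ∨
    ∃ i, i < j ∧ 0 < m' j ∧ (∀ i', i < i' → i' < j → m' i' = 0) ∧ m = bump (drop m' j) i := by
  have hj' : m' j = m j + 1 := by rw [← h]; exact carTrans_some_j m j
  set s : Finset (Fin κ) := Finset.univ.filter fun i => i < j ∧ 0 < m i with hs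
  by_cases hne : s.Nonempty
  · right
    set i₀ := s.max' hne with hi₀
    have hi₀s : i₀ ∈ s := Finset.max'_mem s hne
    simp only [hs, mem_filter, mem_univ, true_and] at hi₀s
    have hi₀j : i₀ < j := hi₀s.1
    have hi₀jne : i₀ ≠ j := fun he => by rw [he] at hi₀j; exact lt_irrefl _ hi₀j
    rw [carTrans_some_def, ← hs, dec1_of_nonempty _ _ hne, ← hi₀] at h
    have hgap : ∀ i', i₀ < i' → i' < j → m' i' = 0 := by
      intro i' h1 h2
      have h1ne : i' ≠ i₀ := fun he => by rw [he] at h1; exact lt_irrefl _ h1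
      have h2ne : i' ≠ j := fun he => by rw [he] at h2; exact lt_irrefl _ h2
      have : m i' = 0 := by
        by_contra hmi
        have : i' ∈ s := by simp [hs]; exact ⟨h2, by omega⟩
        exact absurd (Finset.le_max' s i' this) (not_le.mpr h1)
      rw [← h, Function.update_apply, if_neg h1ne, Function.update_apply, if_neg h2ne, this]
    refine ⟨i₀, hi₀j, by omega, hgap, ?_⟩
    funext x
    by_cases hxi : x = i₀
    · rw [hxi, bump_apply, if_pos rfl, drop_apply, if_neg hi₀jne]
      have : m' i₀ = m i₀ - 1 := by
        rw [← h, Function.update_apply, if_pos rfl, Function.update_apply, if_neg hi₀jne]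
      rw [this]
      have := hi₀s.2
      omega
    · rw [bump_apply, if_neg hxi, drop_apply]
      by_cases hxj : x = j
      · rw [if_pos hxj, hxj, hj']; omega
      · rw [if_neg hxj, ← h, Function.update_apply, if_neg hxi, Function.update_apply,
          if_neg hxj]
  · left
    have h0 : ∀ i, i < j → m i = 0 := by
      intro i hi
      by_contra hmi
      exact hne ⟨i, by simp [hs]; exact ⟨hi, by omega⟩⟩
    rw [carTrans_some_nolow m j h0] at h
    refine ⟨by omega, ?_, ?_⟩
    · intro i hi
      rw [← h, bump_apply, if_neg (by intro he; rw [he] at hi; exact lt_irrefl _ hi)]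
      exact h0 i hi
    · funext x
      rw [drop_apply]
      by_cases hxj : x = j
      · rw [if_pos hxj, hxj, hj']; omega
      · rw [if_neg hxj, ← h, bump_apply, if_neg hxj]


lemma carTrans_none_self_iff (m' : Fin κ → ℕ) :
    carTrans m' none = m' ↔ ∀ i, m' i = 0 := by
  constructor
  · intro h
    rcases carTrans_none_inv m' m' h with ⟨_, hz⟩ | ⟨j, _, he⟩
    · exact hz
    · exact absurd he.symm (bump_ne m' j)
  · exact carTrans_none_zero m'

lemma carTrans_none_bump_iff (m' : Fin κ → ℕ) (j : Fin κ) :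
    carTrans (bump m' j) none = m' ↔ ∀ i, j < i → m' i = 0 := by
  constructor
  · intro h
    rcases carTrans_none_inv _ m' h with ⟨he, _⟩ | ⟨j', hj', he⟩
    · exact absurd he (bump_ne m' j)
    · have := bump_inj m' he
      subst this
      exact hj' 
  · exact carTrans_none_bump m' j

lemma carTrans_some_drop_iff (m' : Fin κ → ℕ) (j : Fin κ) :
    carTrans (drop m' j) (some j) = m' ↔ 0 < m' j ∧ ∀ i, i < j → m' i = 0 := by
  constructor
  · intro h
    rcases carTrans_some_inv _ m' j h with ⟨h1, h2, _⟩ | ⟨i, _, _, _, he⟩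
    · exact ⟨h1, h2⟩
    · exact absurd he.symm (bump_ne _ i)
  · exact fun h => carTrans_some_drop m' j h.1 h.2

lemma carTrans_some_swap_iff (m' : Fin κ → ℕ) (i j : Fin κ) :
    carTrans (bump (drop m' j) i) (some j) = m' ↔
      i < j ∧ 0 < m' j ∧ ∀ i', i < i' → i' < j → m' i' = 0 := by
  constructor
  · intro h
    rcases carTrans_some_inv _ m' j h with ⟨_, _, he⟩ | ⟨i', h1, h2, h3, he⟩
    · exact absurd he (bump_ne _ i)
    · have := bump_inj (drop m' j) he
      subst this
      exact ⟨h1, h2, h3⟩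
  · exact fun h => carTrans_some_swap m' i j h.1 h.2.1 h.2.2

/-! ### the box of reachable states -/

noncomputable def box (m : Fin κ → ℕ) (t : ℕ) : Finset (Fin κ → ℕ) :=
  Fintype.piFinset fun i => Finset.range (m i + t + 1)

lemma mem_box {m z : Fin κ → ℕ} {t : ℕ} : z ∈ box m t ↔ ∀ i, z i ≤ m i + t := by
  simp [box, Fintype.mem_piFinset, Nat.lt_succ_iff]

section kernel

variable (p : Fin (κ + 1) → ℝ)

lemma pOf_pos (hp : ∀ i, 0 < p i) (y : Option (Fin κ)) : 0 < pOf p y := by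
  cases y <;> simp [pOf] <;> exact hp _

lemma carK_nonneg (hp : ∀ i, 0 < p i) (m m' : Fin κ → ℕ) : 0 ≤ carK p m m' := by
  unfold carK
  apply Finset.sum_nonneg
  intro y _
  split
  · exact (pOf_pos p hp y).le
  · exact le_refl 0

lemma carK_support {m m' : Fin κ → ℕ} (h : m' ∉ box m 1) : carK p m m' = 0 := by
  unfold carK
  apply Finset.sum_eq_zero
  intro y _
  rw [if_neg]
  intro he
  exact h (mem_box.mpr fun i => he ▸ carTrans_le m y i)

lemma sum_pOf (hsum : ∑ i, p i = 1) : ∑ y : Option (Fin κ), pOf p y = 1 := by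
  rw [Fintype.sum_option]
  simp only [pOf]
  rwa [← Fin.sum_univ_succ (f := p)]

lemma carK_summable : Summable (carK p m) := by
  apply summable_of_ne_finset_zero (s := box m 1)
  intro m' hm'
  exact carK_support p hm'

lemma carK_ite_summable (m : Fin κ → ℕ) (y : Option (Fin κ)) (c : (Fin κ → ℕ) → ℝ) :
    Summable (fun m' => if carTrans m y = m' then c m' else 0) := by
  apply summable_of_ne_finset_zero (s := {carTrans m y})
  intro m' hm'
  exact if_neg (fun h => hm' (by simp [h]))

lemma carK_row (hsum : ∑ i, p i = 1) (m : Fin κ → ℕ) : ∑' m', carK p m m' = 1 := by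
  unfold carK
  rw [Summable.tsum_finsetSum (fun y _ => carK_ite_summable m y _)]
  calc ∑ y : Option (Fin κ), ∑' m', (if carTrans m y = m' then pOf p y else 0)
      = ∑ y : Option (Fin κ), pOf p y := by
        apply Finset.sum_congr rfl
        intro y _
        rw [tsum_eq_single (carTrans m y) (fun b' hb' => if_neg (fun he => hb' he.symm))]
        exact if_pos rfl
    _ = 1 := sum_pOf p hsum

lemma carK_le_one (hp : ∀ i, 0 < p i) (hsum : ∑ i, p i = 1) (m m' : Fin κ → ℕ) :
    carK p m m' ≤ 1 := by
  rw [← carK_row p hsum m]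
  exact Summable.le_tsum (carK_summable p) m' (fun _ _ => carK_nonneg p hp _ _)

lemma carK_ge (hp : ∀ i, 0 < p i) {m m' : Fin κ → ℕ} {y : Option (Fin κ)}
    (h : carTrans m y = m') : pOf p y ≤ carK p m m' := by
  unfold carK
  refine le_trans ?_ (Finset.single_le_sum
    (f := fun y => if carTrans m y = m' then pOf p y else 0)
    (fun y _ => by split; exacts [(pOf_pos p hp y).le, le_refl 0])
    (Finset.mem_univ y))
  show pOf p y ≤ if carTrans m y = m' then pOf p y else 0
  rw [if_pos h]

lemma carKpow_zero (m m' : Fin κ → ℕ) :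
    carKpow p 0 m m' = if m = m' then 1 else 0 := rfl

lemma carKpow_succ (t : ℕ) (m m' : Fin κ → ℕ) :
    carKpow p (t + 1) m m' = ∑' z : Fin κ → ℕ, carKpow p t m z * carK p z m' := rfl

lemma carKpow_nonneg (hp : ∀ i, 0 < p i) (t : ℕ) (m m' : Fin κ → ℕ) :
    0 ≤ carKpow p t m m' := by
  induction t generalizing m m' with
  | zero => rw [carKpow_zero]; split <;> norm_num
  | succ t ih =>
      rw [carKpow_succ]
      exact tsum_nonneg fun z => mul_nonneg (ih m z) (carK_nonneg p hp z m')

lemma carKpow_support (t : ℕ) {m m' : Fin κ → ℕ} (h : m' ∉ box m t) :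
    carKpow p t m m' = 0 := by
  induction t generalizing m' with
  | zero =>
      rw [carKpow_zero, if_neg]
      intro he
      exact h (mem_box.mpr fun i => by rw [← he]; omega)
  | succ t ih =>
      rw [carKpow_succ]
      convert tsum_zero with z
      by_cases hz : z ∈ box m t
      · rw [carK_support p, mul_zero]
        intro hm'
        apply h
        rw [mem_box] at hz hm' ⊢
        intro i
        have := hz i; have := hm' i
        omega
      · rw [ih hz, zero_mul]

lemma carKpow_summable (t : ℕ) (m : Fin κ → ℕ) : Summable (carKpow p t m) :=
  summable_of_ne_finset_zero (s := box m t) (fun _ h => carKpow_support p t h)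

lemma carKpow_eq_sum (t : ℕ) (m m' : Fin κ → ℕ) {s : Finset (Fin κ → ℕ)}
    (hs : box m t ⊆ s) :
    carKpow p (t + 1) m m' = ∑ z ∈ s, carKpow p t m z * carK p z m' := by
  rw [carKpow_succ]
  apply tsum_eq_sum
  intro z hz
  rw [carKpow_support p t (fun hb => hz (hs hb)), zero_mul]

lemma carKpow_row (hp : ∀ i, 0 < p i) (hsum : ∑ i, p i = 1) (t : ℕ) (m : Fin κ → ℕ) :
    ∑' m', carKpow p t m m' = 1 := by
  induction t generalizing m with
  | zero =>
      have h0 : ∀ m', carKpow p 0 m m' = if m = m' then (1:ℝ) else 0 := fun _ => rfl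
      rw [tsum_congr h0,
        tsum_eq_single m (fun b' hb' => if_neg (fun he => hb' he.symm))]
      exact if_pos rfl
  | succ t ih =>
      have hsupp : ∀ m' ∉ box m (t + 1), carKpow p (t+1) m m' = 0 :=
        fun m' h => carKpow_support p (t+1) h
      rw [tsum_eq_sum hsupp]
      have hterm : ∀ m', carKpow p (t+1) m m' =
          ∑ z ∈ box m t, carKpow p t m z * carK p z m' :=
        fun m' => carKpow_eq_sum p t m m' (subset_refl _)
      calc ∑ m' ∈ box m (t+1), carKpow p (t+1) m m'
          = ∑ m' ∈ box m (t+1), ∑ z ∈ box m t, carKpow p t m z * carK p z m' :=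
            Finset.sum_congr rfl (fun m' _ => hterm m')
        _ = ∑ z ∈ box m t, ∑ m' ∈ box m (t+1), carKpow p t m z * carK p z m' :=
            Finset.sum_comm
        _ = ∑ z ∈ box m t, carKpow p t m z * ∑ m' ∈ box m (t+1), carK p z m' := by
            apply Finset.sum_congr rfl
            intro z _
            rw [Finset.mul_sum]
        _ = ∑ z ∈ box m t, carKpow p t m z := by
            apply Finset.sum_congr rfl
            intro z hz
            have hsub : ∀ m' ∉ box m (t+1), carK p z m' = 0 := by
              intro m' hm'
              apply carK_support p
              intro hb
              apply hm'
              rw [mem_box] at hz hb ⊢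
              intro i
              have := hz i; have := hb i
              omega
            rw [← tsum_eq_sum (L := SummationFilter.unconditional _) hsub, carK_row p hsum z, mul_one]
        _ = ∑' z, carKpow p t m z := (tsum_eq_sum (fun z hz => carKpow_support p t hz)).symm
        _ = 1 := ih m

lemma carKpow_le_one (hp : ∀ i, 0 < p i) (hsum : ∑ i, p i = 1) (t : ℕ) (m m' : Fin κ → ℕ) :
    carKpow p t m m' ≤ 1 := by
  rw [← carKpow_row p hp hsum t m]
  exact Summable.le_tsum (carKpow_summable p t m) m' (fun _ _ => carKpow_nonneg p hp t m _)

lemma carKpow_pos_step (hp : ∀ i, 0 < p i) {t : ℕ} {m z z' : Fin κ → ℕ} {y : Option (Fin κ)}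
    (hpos : 0 < carKpow p t m z) (hstep : carTrans z y = z') :
    0 < carKpow p (t + 1) m z' := by
  have h1 : 0 < carKpow p t m z * carK p z z' :=
    mul_pos hpos (lt_of_lt_of_le (pOf_pos p hp y) (carK_ge p hp hstep))
  refine lt_of_lt_of_le h1 ?_
  rw [carKpow_succ]
  apply Summable.le_tsum _ z (fun w _ => mul_nonneg (carKpow_nonneg p hp t m w) (carK_nonneg p hp w z'))
  apply summable_of_ne_finset_zero (s := box m t)
  intro w hw
  rw [carKpow_support p t hw, zero_mul]

/-! ### irreducibility -/

lemma sum_carTrans_none {m : Fin κ → ℕ} (h : ∃ i, 0 < m i) :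
    ∑ i, carTrans m none i + 1 = ∑ i, m i := by
  set s : Finset (Fin κ) := Finset.univ.filter fun i => 0 < m i with hs
  have hne : s.Nonempty := by
    obtain ⟨i, hi⟩ := h
    exact ⟨i, by simp only [hs, mem_filter, mem_univ, true_and]; exact hi⟩
  set T := s.max' hne with hT
  have hmT : 0 < m T := by
    have := Finset.max'_mem s hne
    simpa [hs] using this
  rw [carTrans_none_def, ← hs, dec1_of_nonempty _ _ hne, ← hT]
  rw [Finset.sum_update_of_mem (Finset.mem_univ T)]
  have h5 := Finset.sum_eq_sum_sdiff_singleton_add (Finset.mem_univ T) m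
  omega

lemma reach_down (hp : ∀ i, 0 < p i) :
    ∀ (n s : ℕ) (m z : Fin κ → ℕ), 0 < carKpow p s m z → ∑ i, z i = n →
      0 < carKpow p (s + n) m (fun _ => 0) := by
  intro n
  induction n with
  | zero =>
      intro s m z hpos hsum
      have : z = fun _ => 0 := by
        funext i
        exact (Finset.sum_eq_zero_iff.mp hsum) i (Finset.mem_univ i)
      rwa [← this, Nat.add_zero]
  | succ n ih =>
      intro s m z hpos hsum
      have hex : ∃ i, 0 < z i := by
        by_contra hc
        push_neg at hc
        have : ∑ i, z i = 0 := Finset.sum_eq_zero (fun i _ => by have := hc i; omega)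
        omega
      have hstep : 0 < carKpow p (s + 1) m (carTrans z none) :=
        carKpow_pos_step p hp hpos rfl
      have hsum' : ∑ i, carTrans z none i = n := by
        have := sum_carTrans_none hex
        omega
      have := ih (s + 1) m (carTrans z none) hstep hsum'
      rwa [show s + 1 + n = s + (n + 1) by omega] at this

lemma reach_loop (hp : ∀ i, 0 < p i) (k : ℕ) {s : ℕ} {m : Fin κ → ℕ}
    (h : 0 < carKpow p s m (fun _ => 0)) : 0 < carKpow p (s + k) m (fun _ => 0) := by
  induction k with
  | zero => exact h
  | succ k ih =>
      have : carTrans (fun _ : Fin κ => 0) none = fun _ => 0 :=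
        carTrans_none_zero _ (fun _ => rfl)
      have := carKpow_pos_step p hp ih this
      rwa [show s + (k+1) = s + k + 1 by omega]

lemma reach_up_at (hp : ∀ i, 0 < p i) (jf : Fin κ) :
    ∀ (c : ℕ) {s : ℕ} {m z : Fin κ → ℕ}, (∀ i, i ≤ jf → z i = 0) →
      0 < carKpow p s m z → 0 < carKpow p (s + c) m (Function.update z jf c) := by
  intro c
  induction c with
  | zero =>
      intro s m z hz hpos
      have : Function.update z jf 0 = z := by
        rw [← hz jf (le_refl jf)]
        exact Function.update_eq_self jf z
      rwa [this, Nat.add_zero]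
  | succ c ih =>
      intro s m z hz hpos
      have h1 := ih hz hpos
      have hstep : carTrans (Function.update z jf c) (some jf) =
          Function.update z jf (c + 1) := by
        rw [carTrans_some_nolow]
        · funext x
          rw [bump_apply]
          by_cases hx : x = jf
          · rw [if_pos hx, hx, Function.update_apply, if_pos rfl, Function.update_apply,
              if_pos rfl]
          · rw [if_neg hx, Function.update_apply, if_neg hx, Function.update_apply, if_neg hx]
        · intro i hi
          rw [Function.update_apply, if_neg (by intro he; rw [he] at hi; exact lt_irrefl _ hi)]
          exact hz i (le_of_lt hi)
      have := carKpow_pos_step p hp h1 hstep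
      rwa [show s + c + 1 = s + (c+1) by omega] at this

/-- truncation of `m'` to indices `≥ j` -/
noncomputable def gtr (m' : Fin κ → ℕ) (j : ℕ) : Fin κ → ℕ :=
  fun i => if j ≤ (i : ℕ) then m' i else 0

lemma gtr_apply (m' : Fin κ → ℕ) (j : ℕ) (i : Fin κ) :
    gtr m' j i = if j ≤ (i : ℕ) then m' i else 0 := rfl

lemma reach_up (hp : ∀ i, 0 < p i) (m' : Fin κ → ℕ) :
    ∀ (d : ℕ), d ≤ κ → ∀ {s : ℕ} {m : Fin κ → ℕ}, 0 < carKpow p s m (fun _ => 0) →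
      0 < carKpow p (s + ∑ i, gtr m' (κ - d) i) m (gtr m' (κ - d)) := by
  intro d
  induction d with
  | zero =>
      intro _ s m hpos
      have h1 : gtr m' κ = fun _ => 0 := by
        funext i
        have : (i : ℕ) < κ := i.isLt
        rw [gtr_apply, if_neg (by omega)]
      have h2 : ∑ i, gtr m' κ i = 0 := by rw [h1]; simp
      rw [Nat.sub_zero, h2, Nat.add_zero, h1]
      exact hpos
  | succ d ih =>
      intro hd s m hpos
      have hdκ : d ≤ κ := by omega
      have h1 := ih hdκ hpos
      set j : ℕ := κ - (d + 1) with hj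
      have hjκ : j < κ := by omega
      set jf : Fin κ := ⟨j, hjκ⟩ with hjf
      have hsucc : κ - d = j + 1 := by omega
      rw [hsucc] at h1
      have hzero : ∀ i : Fin κ, i ≤ jf → gtr m' (j + 1) i = 0 := by
        intro i hi
        have hij : (i : ℕ) ≤ j := hi
        rw [gtr_apply, if_neg (by omega)]
      have h2 := reach_up_at p hp jf (m' jf) hzero h1
      have hupd : Function.update (gtr m' (j + 1)) jf (m' jf) = gtr m' j := by
        funext x
        rw [Function.update_apply]
        by_cases hx : x = jf
        · rw [if_pos hx, hx, gtr_apply]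
          have hle : j ≤ ((⟨j, hjκ⟩ : Fin κ) : ℕ) := le_refl j
          rw [if_pos hle]
        · rw [if_neg hx, gtr_apply, gtr_apply]
          have hxj : (x : ℕ) ≠ j := fun he => hx (Fin.ext he)
          by_cases hc : j + 1 ≤ (x : ℕ)
          · rw [if_pos hc, if_pos (by omega)]
          · rw [if_neg hc, if_neg (by omega)]
      have hsum : ∑ i, gtr m' (j + 1) i + m' jf = ∑ i, gtr m' j i := by
        rw [← hupd, Finset.sum_update_of_mem (Finset.mem_univ jf)]
        have h5 := Finset.sum_eq_sum_sdiff_singleton_add (Finset.mem_univ jf) (gtr m' (j+1))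
        have h6 := hzero jf (le_refl jf)
        omega
      rw [hupd] at h2
      rwa [show s + ∑ i, gtr m' (j+1) i + m' jf = s + ∑ i, gtr m' j i from by omega] at h2

theorem carKpow_irred (hp : ∀ i, 0 < p i) (m m' : Fin κ → ℕ) :
    ∀ t ≥ (∑ i, m i) + (∑ i, m' i), 0 < carKpow p t m m' := by
  intro t ht
  set A := ∑ i, m i with hA
  set B := ∑ i, m' i with hB
  set k := t - (A + B) with hk
  have h0 : 0 < carKpow p 0 m m := by
    rw [carKpow_zero, if_pos rfl]; norm_num
  have h1 : 0 < carKpow p (0 + A) m (fun _ => 0) := reach_down p hp A 0 m m h0 rfl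
  have h2 : 0 < carKpow p (0 + A + k) m (fun _ => 0) := reach_loop p hp k h1
  have h3 := reach_up p hp m' κ (le_refl κ) h2
  have hg : gtr m' (κ - κ) = m' := by
    funext i
    rw [gtr, if_pos (by omega)]
  rw [hg] at h3
  rw [show t = 0 + A + k + B from by omega]
  exact h3

/-! ### stationarity of carPi -/

lemma pre_none_vanish (m' : Fin κ → ℕ) (c : (Fin κ → ℕ) → ℝ) :
    ∀ m ∉ insert m' (Finset.univ.image (bump m')),
      (if carTrans m none = m' then c m else 0) = 0 := by
  intro m hm
  rw [if_neg]
  intro h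
  rcases carTrans_none_inv m m' h with ⟨he, _⟩ | ⟨j, _, he⟩
  · exact hm (by rw [he]; exact Finset.mem_insert_self _ _)
  · exact hm (by rw [he]; exact Finset.mem_insert_of_mem (Finset.mem_image_of_mem _ (Finset.mem_univ j)))

lemma pre_some_vanish (m' : Fin κ → ℕ) (j : Fin κ) (c : (Fin κ → ℕ) → ℝ) :
    ∀ m ∉ insert (drop m' j) (Finset.univ.image (bump (drop m' j))),
      (if carTrans m (some j) = m' then c m else 0) = 0 := by
  intro m hm
  rw [if_neg]
  intro h
  rcases carTrans_some_inv m m' j h with ⟨_, _, he⟩ | ⟨i, _, _, _, he⟩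
  · exact hm (by rw [he]; exact Finset.mem_insert_self _ _)
  · exact hm (by rw [he]; exact Finset.mem_insert_of_mem (Finset.mem_image_of_mem _ (Finset.mem_univ i)))

lemma tsum_pre_none (m' : Fin κ → ℕ) (c : (Fin κ → ℕ) → ℝ) :
    ∑' m, (if carTrans m none = m' then c m else 0) =
      (if ∀ i, m' i = 0 then c m' else 0) +
      ∑ j, (if ∀ i, j < i → m' i = 0 then c (bump m' j) else 0) := by
  have hnotmem : m' ∉ Finset.univ.image (bump m') := by
    rw [Finset.mem_image]
    rintro ⟨j, _, he⟩
    exact bump_ne m' j he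
  rw [tsum_eq_sum (pre_none_vanish m' c), Finset.sum_insert hnotmem,
    Finset.sum_image (fun i _ j _ h => bump_inj m' h)]
  congr 1
  · by_cases hz : ∀ i, m' i = 0
    · rw [if_pos ((carTrans_none_self_iff m').mpr hz), if_pos hz]
    · rw [if_neg (fun h => hz ((carTrans_none_self_iff m').mp h)), if_neg hz]
  · apply Finset.sum_congr rfl
    intro j _
    by_cases hA : ∀ i, j < i → m' i = 0
    · rw [if_pos ((carTrans_none_bump_iff m' j).mpr hA), if_pos hA]
    · rw [if_neg (fun h => hA ((carTrans_none_bump_iff m' j).mp h)), if_neg hA]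

lemma tsum_pre_some (m' : Fin κ → ℕ) (j : Fin κ) (c : (Fin κ → ℕ) → ℝ) :
    ∑' m, (if carTrans m (some j) = m' then c m else 0) =
      (if 0 < m' j ∧ ∀ i, i < j → m' i = 0 then c (drop m' j) else 0) +
      ∑ i, (if i < j ∧ 0 < m' j ∧ ∀ i', i < i' → i' < j → m' i' = 0
            then c (bump (drop m' j) i) else 0) := by
  have hnotmem : drop m' j ∉ Finset.univ.image (bump (drop m' j)) := by
    rw [Finset.mem_image]
    rintro ⟨i, _, he⟩
    exact bump_ne _ i he
  rw [tsum_eq_sum (pre_some_vanish m' j c), Finset.sum_insert hnotmem,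
    Finset.sum_image (fun a _ b _ h => bump_inj _ h)]
  congr 1
  · by_cases hC : 0 < m' j ∧ ∀ i, i < j → m' i = 0
    · rw [if_pos ((carTrans_some_drop_iff m' j).mpr hC), if_pos hC]
    · rw [if_neg (fun h => hC ((carTrans_some_drop_iff m' j).mp h)), if_neg hC]
  · apply Finset.sum_congr rfl
    intro i _
    by_cases hB : i < j ∧ 0 < m' j ∧ ∀ i', i < i' → i' < j → m' i' = 0
    · rw [if_pos ((carTrans_some_swap_iff m' i j).mpr hB), if_pos hB]
    · rw [if_neg (fun h => hB ((carTrans_some_swap_iff m' i j).mp h)), if_neg hB]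

lemma ind_a (m' : Fin κ → ℕ) :
    (if ∀ i, m' i = 0 then (1:ℝ) else 0) +
      ∑ j, (if 0 < m' j ∧ ∀ i, i < j → m' i = 0 then (1:ℝ) else 0) = 1 := by
  by_cases hz : ∀ i, m' i = 0
  · rw [if_pos hz, Finset.sum_eq_zero, add_zero]
    intro j _
    rw [if_neg]
    rintro ⟨h1, -⟩
    rw [hz j] at h1
    exact lt_irrefl 0 h1
  · rw [if_neg hz, zero_add]
    push_neg at hz
    obtain ⟨i0, hi0⟩ := hz
    set s : Finset (Fin κ) := Finset.univ.filter fun i => 0 < m' i with hs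
    have hne : s.Nonempty := ⟨i0, by simp only [hs, mem_filter, mem_univ, true_and]; omega⟩
    set j₀ := s.min' hne with hj₀
    have hj₀s : j₀ ∈ s := Finset.min'_mem s hne
    have hj₀pos : 0 < m' j₀ := by simpa [hs] using hj₀s
    rw [Finset.sum_eq_single j₀]
    · rw [if_pos]
      refine ⟨hj₀pos, fun i hi => ?_⟩
      by_contra hmi
      have : i ∈ s := by simp only [hs, mem_filter, mem_univ, true_and]; omega
      exact absurd (Finset.min'_le s i this) (not_le.mpr hi)
    · intro b _ hb
      rw [if_neg]
      rintro ⟨h1, h2⟩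
      have hbs : b ∈ s := by simp only [hs, mem_filter, mem_univ, true_and]; exact h1
      have : j₀ < b := lt_of_le_of_ne (Finset.min'_le s b hbs) (fun he => hb he.symm)
      rw [h2 j₀ this] at hj₀pos
      exact lt_irrefl 0 hj₀pos
    · intro h
      exact absurd (Finset.mem_univ j₀) h

lemma ind_b (m' : Fin κ → ℕ) (k : Fin κ) :
    (if ∀ i, k < i → m' i = 0 then (1:ℝ) else 0) +
      ∑ j, (if k < j ∧ 0 < m' j ∧ ∀ i', k < i' → i' < j → m' i' = 0 then (1:ℝ) else 0)
      = 1 := by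
  by_cases hz : ∀ i, k < i → m' i = 0
  · rw [if_pos hz, Finset.sum_eq_zero, add_zero]
    intro j _
    rw [if_neg]
    rintro ⟨h1, h2, -⟩
    rw [hz j h1] at h2
    exact lt_irrefl 0 h2
  · rw [if_neg hz, zero_add]
    push_neg at hz
    obtain ⟨i0, hi0a, hi0b⟩ := hz
    set s : Finset (Fin κ) := Finset.univ.filter fun i => k < i ∧ 0 < m' i with hs
    have hne : s.Nonempty :=
      ⟨i0, by simp only [hs, mem_filter, mem_univ, true_and]; exact ⟨hi0a, by omega⟩⟩
    set j₀ := s.min' hne with hj₀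
    have hj₀s : j₀ ∈ s := Finset.min'_mem s hne
    have hj₀p : k < j₀ ∧ 0 < m' j₀ := by simpa [hs] using hj₀s
    rw [Finset.sum_eq_single j₀]
    · rw [if_pos]
      refine ⟨hj₀p.1, hj₀p.2, fun i hi1 hi2 => ?_⟩
      by_contra hmi
      have : i ∈ s := by
        simp only [hs, mem_filter, mem_univ, true_and]
        exact ⟨hi1, by omega⟩
      exact absurd (Finset.min'_le s i this) (not_le.mpr hi2)
    · intro b _ hb
      rw [if_neg]
      rintro ⟨h1, h2, h3⟩
      have hbs : b ∈ s := by
        simp only [hs, mem_filter, mem_univ, true_and]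
        exact ⟨h1, h2⟩
      have : j₀ < b := lt_of_le_of_ne (Finset.min'_le s b hbs) (fun he => hb he.symm)
      rw [h3 j₀ hj₀p.1 this] at hj₀p
      exact absurd hj₀p.2 (lt_irrefl 0)
    · intro h
      exact absurd (Finset.mem_univ j₀) h

lemma carPi_pos (hp : ∀ i, 0 < p i) (hsub : ∀ i : Fin κ, p i.succ < p 0) (m : Fin κ → ℕ) :
    0 < carPi p m := by
  unfold carPi
  apply Finset.prod_pos
  intro i _
  have h0 : 0 < p 0 := hp 0
  have h1 : p i.succ / p 0 < 1 := (div_lt_one h0).mpr (hsub i)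
  have h2 : 0 < p i.succ / p 0 := div_pos (hp _) h0
  have h3 : 0 < 1 - p i.succ / p 0 := by linarith
  positivity

lemma carPi_bump (hp : ∀ i, 0 < p i) (m : Fin κ → ℕ) (j : Fin κ) :
    carPi p (bump m j) = (p j.succ / p 0) * carPi p m := by
  unfold carPi
  have hcong : ∀ i : Fin κ,
      (1 - p i.succ / p 0) * (p i.succ / p 0) ^ (bump m j i) =
      Function.update (fun i : Fin κ => (1 - p i.succ / p 0) * (p i.succ / p 0) ^ (m i)) j
        ((1 - p j.succ / p 0) * (p j.succ / p 0) ^ (m j + 1)) i := by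
    intro i
    rw [Function.update_apply, bump_apply]
    by_cases hij : i = j
    · rw [if_pos hij, if_pos hij, hij]
    · rw [if_neg hij, if_neg hij]
  rw [Finset.prod_congr rfl (fun i _ => hcong i),
    Finset.prod_update_of_mem (Finset.mem_univ j),
    Finset.prod_eq_prod_diff_singleton_mul (Finset.mem_univ j)
      (fun i : Fin κ => (1 - p i.succ / p 0) * (p i.succ / p 0) ^ (m i))]
  rw [pow_succ]
  ring

lemma carPi_drop (hp : ∀ i, 0 < p i) (m' : Fin κ → ℕ) (j : Fin κ) (hj : 0 < m' j) :
    carPi p m' = (p j.succ / p 0) * carPi p (drop m' j) := by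
  conv_lhs => rw [← bump_drop m' j hj]
  exact carPi_bump p hp (drop m' j) j

lemma ite_mul_helper (c : Prop) [Decidable c] (a x : ℝ) :
    (if c then a * x else 0) = a * ((if c then (1:ℝ) else 0) * x) := by
  split_ifs <;> ring

lemma key_ident (hsum : ∑ i, p i = 1) (m' : Fin κ → ℕ) :
    ((if ∀ i, m' i = 0 then (1:ℝ) else 0) * p 0
     + ∑ j, (if ∀ i, j < i → m' i = 0 then (1:ℝ) else 0) * p j.succ)
     + ∑ j, ((if 0 < m' j ∧ ∀ i, i < j → m' i = 0 then (1:ℝ) else 0) * p 0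
        + ∑ i, (if i < j ∧ 0 < m' j ∧ ∀ i', i < i' → i' < j → m' i' = 0 then (1:ℝ) else 0)
            * p i.succ) = 1 := by
  have ha := ind_a m'
  rw [Finset.sum_add_distrib]
  have hBswap : ∑ j, ∑ i,
      (if i < j ∧ 0 < m' j ∧ ∀ i', i < i' → i' < j → m' i' = 0 then (1:ℝ) else 0) * p i.succ
      = ∑ i, ∑ j,
      (if i < j ∧ 0 < m' j ∧ ∀ i', i < i' → i' < j → m' i' = 0 then (1:ℝ) else 0) * p i.succ :=
    Finset.sum_comm
  have hBi : ∀ i : Fin κ, ∑ j,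
      (if i < j ∧ 0 < m' j ∧ ∀ i', i < i' → i' < j → m' i' = 0 then (1:ℝ) else 0) * p i.succ
      = (1 - if ∀ i', i < i' → m' i' = 0 then (1:ℝ) else 0) * p i.succ := by
    intro i
    rw [← Finset.sum_mul]
    congr 1
    have := ind_b m' i
    linarith
  have hC : ∑ j, (if 0 < m' j ∧ ∀ i, i < j → m' i = 0 then (1:ℝ) else 0) * p 0
      = (∑ j, if 0 < m' j ∧ ∀ i, i < j → m' i = 0 then (1:ℝ) else 0) * p 0 :=
    (Finset.sum_mul _ _ _).symm
  rw [hBswap, Finset.sum_congr rfl (fun i _ => hBi i), hC]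
  have hAB : ∑ j, (if ∀ i, j < i → m' i = 0 then (1:ℝ) else 0) * p j.succ
      + ∑ i, (1 - if ∀ i', i < i' → m' i' = 0 then (1:ℝ) else 0) * p i.succ
      = ∑ i : Fin κ, p i.succ := by
    rw [← Finset.sum_add_distrib]
    apply Finset.sum_congr rfl
    intro i _
    ring
  have hfin : p 0 + ∑ i : Fin κ, p i.succ = 1 := by
    rw [← Fin.sum_univ_succ (f := p)]
    exact hsum
  have ha' : ((if ∀ i, m' i = 0 then (1:ℝ) else 0)
      + ∑ j, if 0 < m' j ∧ ∀ i, i < j → m' i = 0 then (1:ℝ) else 0) * p 0 = p 0 := by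
    rw [ha, one_mul]
  rw [add_mul] at ha'
  linarith [ha', hAB, hfin]

theorem carPi_stationary (hp : ∀ i, 0 < p i) (hsum : ∑ i, p i = 1)
    (hsub : ∀ i : Fin κ, p i.succ < p 0) (m' : Fin κ → ℕ) :
    ∑' m, carPi p m * carK p m m' = carPi p m' := by
  have hp0 : (0:ℝ) < p 0 := hp 0
  have hrw : ∀ m, carPi p m * carK p m m' =
      ∑ y : Option (Fin κ), (if carTrans m y = m' then carPi p m * pOf p y else 0) := by
    intro m
    unfold carK
    rw [Finset.mul_sum]
    apply Finset.sum_congr rfl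
    intro y _
    rw [mul_ite, mul_zero]
  have hsummable : ∀ y : Option (Fin κ),
      Summable (fun m => if carTrans m y = m' then carPi p m * pOf p y else 0) := by
    intro y
    cases y with
    | none => exact summable_of_ne_finset_zero (pre_none_vanish m' _)
    | some j => exact summable_of_ne_finset_zero (pre_some_vanish m' j _)
  rw [tsum_congr hrw, Summable.tsum_finsetSum (fun y _ => hsummable y), Fintype.sum_option]
  have hnone : ∑' m, (if carTrans m none = m' then carPi p m * pOf p none else 0)
      = (if ∀ i, m' i = 0 then (1:ℝ) else 0) * p 0 * carPi p m'
        + ∑ j, (if ∀ i, j < i → m' i = 0 then (1:ℝ) else 0) * p j.succ * carPi p m' := by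
    rw [tsum_pre_none m' (fun m => carPi p m * pOf p none)]
    congr 1
    · show (if ∀ i, m' i = 0 then carPi p m' * p 0 else 0) = _
      split_ifs <;> ring
    · apply Finset.sum_congr rfl
      intro j _
      show (if ∀ i, j < i → m' i = 0 then carPi p (bump m' j) * p 0 else 0) = _
      split_ifs with h
      · rw [carPi_bump p hp m' j]
        first
        | (field_simp; ring)
        | field_simp
      · ring
  have hsome : ∀ j : Fin κ,
      ∑' m, (if carTrans m (some j) = m' then carPi p m * pOf p (some j) else 0)
      = (if 0 < m' j ∧ ∀ i, i < j → m' i = 0 then (1:ℝ) else 0) * p 0 * carPi p m'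
        + ∑ i, (if i < j ∧ 0 < m' j ∧ ∀ i', i < i' → i' < j → m' i' = 0 then (1:ℝ) else 0)
            * p i.succ * carPi p m' := by
    intro j
    rw [tsum_pre_some m' j (fun m => carPi p m * pOf p (some j))]
    congr 1
    · show (if 0 < m' j ∧ ∀ i, i < j → m' i = 0 then carPi p (drop m' j) * p j.succ else 0) = _
      split_ifs with h
      · rw [carPi_drop p hp m' j h.1]
        first
        | (field_simp; ring)
        | field_simp
      · ring
    · apply Finset.sum_congr rfl
      intro i _
      show (if i < j ∧ 0 < m' j ∧ ∀ i', i < i' → i' < j → m' i' = 0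
          then carPi p (bump (drop m' j) i) * p j.succ else 0) = _
      split_ifs with h
      · rw [carPi_bump p hp (drop m' j) i, carPi_drop p hp m' j h.2.1]
        first
        | (field_simp; ring)
        | field_simp
      · ring
  rw [hnone, Finset.sum_congr rfl (fun j _ => hsome j)]
  have hterm : ∀ j : Fin κ,
      (if 0 < m' j ∧ ∀ i, i < j → m' i = 0 then (1:ℝ) else 0) * p 0 * carPi p m'
        + ∑ i, (if i < j ∧ 0 < m' j ∧ ∀ i', i < i' → i' < j → m' i' = 0 then (1:ℝ) else 0)
            * p i.succ * carPi p m'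
      = ((if 0 < m' j ∧ ∀ i, i < j → m' i = 0 then (1:ℝ) else 0) * p 0
        + ∑ i, (if i < j ∧ 0 < m' j ∧ ∀ i', i < i' → i' < j → m' i' = 0 then (1:ℝ) else 0)
            * p i.succ) * carPi p m' := by
    intro j
    rw [add_mul, Finset.sum_mul]
  rw [Finset.sum_congr rfl (fun j _ => hterm j), ← Finset.sum_mul, ← Finset.sum_mul,
    ← add_mul, ← add_mul, key_ident p hsum m', one_mul]

/-! ### total mass of carPi -/

set_option maxHeartbeats 1000000 in
lemma geom_pi : ∀ (n : ℕ) (r : Fin n → ℝ), (∀ i, 0 ≤ r i) → (∀ i, r i < 1) →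
    Summable (fun m : Fin n → ℕ => ∏ i, (1 - r i) * r i ^ m i) ∧
    ∑' m : Fin n → ℕ, ∏ i, (1 - r i) * r i ^ m i = 1 := by
  intro n
  induction n with
  | zero =>
      intro r h0 h1
      have hall : ∀ b : Fin 0 → ℕ, b = fun i => i.elim0 := by
        intro b; funext i; exact i.elim0
      constructor
      · apply summable_of_ne_finset_zero (s := {fun i => i.elim0})
        intro b hb
        exact absurd (by rw [hall b]; exact Finset.mem_singleton_self _) hb
      · rw [tsum_eq_single (fun i => i.elim0) (fun b hb => absurd (hall b) hb)]
        simp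
  | succ n ih =>
      intro r h0 h1
      obtain ⟨ihS, ihT⟩ := ih (fun i => r i.succ) (fun i => h0 _) (fun i => h1 _)
      set g : ℕ → ℝ := fun k => (1 - r 0) * r 0 ^ k with hgdef
      set h : (Fin n → ℕ) → ℝ := fun v => ∏ i, (1 - r i.succ) * r i.succ ^ v i with hhdef
      have hg : Summable g := (summable_geometric_of_lt_one (h0 0) (h1 0)).mul_left _
      have hr0 : (1:ℝ) - r 0 ≠ 0 := by have := h1 0; intro he; linarith
      have hsumg : ∑' k, g k = 1 := by
        rw [hgdef]
        simp only
        rw [tsum_mul_left, tsum_geometric_of_lt_one (h0 0) (h1 0), mul_inv_cancel₀ hr0]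
      have hg0 : ∀ k, 0 ≤ g k := by
        intro k
        have := h1 0; have := h0 0
        apply mul_nonneg (by linarith) (pow_nonneg (h0 0) k)
      have hh0 : ∀ v, 0 ≤ h v := by
        intro v
        apply Finset.prod_nonneg
        intro i _
        have := h1 i.succ; have := h0 i.succ
        apply mul_nonneg (by linarith) (pow_nonneg (h0 _) _)
      have hF : Summable (fun q : ℕ × (Fin n → ℕ) => g q.1 * h q.2) :=
        hg.mul_of_nonneg ihS hg0 hh0
      have hfe : ∀ m : Fin (n+1) → ℕ,
          (∏ i, (1 - r i) * r i ^ m i)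
            = g (((Fin.consEquiv fun _ : Fin (n+1) => ℕ).symm) m).1 * h (((Fin.consEquiv fun _ : Fin (n+1) => ℕ).symm) m).2 := by
        intro m
        have he1 : (((Fin.consEquiv fun _ : Fin (n+1) => ℕ).symm) m).1 = m 0 := rfl
        have he2 : (((Fin.consEquiv fun _ : Fin (n+1) => ℕ).symm) m).2 = fun i => m i.succ := rfl
        rw [Fin.prod_univ_succ, he1, he2]
      constructor
      · rw [show (fun m : Fin (n+1) → ℕ => ∏ i, (1 - r i) * r i ^ m i)
            = (fun q : ℕ × (Fin n → ℕ) => g q.1 * h q.2) ∘ ((Fin.consEquiv fun _ : Fin (n+1) => ℕ).symm)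
            from funext hfe]
        exact ((Fin.consEquiv fun _ : Fin (n+1) => ℕ).symm).summable_iff.mpr hF
      · calc ∑' m : Fin (n+1) → ℕ, ∏ i, (1 - r i) * r i ^ m i
            = ∑' m : Fin (n+1) → ℕ,
                g (((Fin.consEquiv fun _ : Fin (n+1) => ℕ).symm) m).1 * h (((Fin.consEquiv fun _ : Fin (n+1) => ℕ).symm) m).2 :=
              tsum_congr hfe
          _ = ∑' q : ℕ × (Fin n → ℕ), g q.1 * h q.2 :=
              ((Fin.consEquiv fun _ : Fin (n+1) => ℕ).symm).tsum_eq (fun q : ℕ × (Fin n → ℕ) => g q.1 * h q.2)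
          _ = ∑' (b : ℕ) (c : Fin n → ℕ), g b * h c := by
              have hrow : ∀ b : ℕ, Summable (fun c : Fin n → ℕ => g b * h c) :=
                fun b => ihS.mul_left (g b)
              exact Summable.tsum_prod' hF hrow
          _ = ∑' (b : ℕ), g b * ∑' c, h c := tsum_congr (fun b => tsum_mul_left)
          _ = ∑' (b : ℕ), g b := by rw [ihT]; simp
          _ = 1 := hsumg

lemma carPi_summable_mass (hp : ∀ i, 0 < p i) (hsub : ∀ i : Fin κ, p i.succ < p 0) :
    Summable (carPi p) ∧ ∑' m, carPi p m = 1 := by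
  have h0 : ∀ i : Fin κ, 0 ≤ p i.succ / p 0 := fun i => (div_pos (hp _) (hp 0)).le
  have h1 : ∀ i : Fin κ, p i.succ / p 0 < 1 := fun i => (div_lt_one (hp 0)).mpr (hsub i)
  exact geom_pi κ (fun i => p i.succ / p 0) h0 h1

/-! ### stationary measures -/

lemma summable_mul_K (hp : ∀ i, 0 < p i) (hsum : ∑ i, p i = 1) {ν : (Fin κ → ℕ) → ℝ}
    (hν0 : ∀ m, 0 ≤ ν m) (hνs : Summable ν) (t : ℕ) (x : Fin κ → ℕ) :
    Summable (fun z => ν z * carKpow p t z x) := by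
  apply Summable.of_nonneg_of_le
    (fun z => mul_nonneg (hν0 z) (carKpow_nonneg p hp t z x)) _ hνs
  intro z
  calc ν z * carKpow p t z x ≤ ν z * 1 :=
        mul_le_mul_of_nonneg_left (carKpow_le_one p hp hsum t z x) (hν0 z)
    _ = ν z := mul_one _

lemma summable_mul_K1 (hp : ∀ i, 0 < p i) (hsum : ∑ i, p i = 1) {ν : (Fin κ → ℕ) → ℝ}
    (hν0 : ∀ m, 0 ≤ ν m) (hνs : Summable ν) (x : Fin κ → ℕ) :
    Summable (fun z => ν z * carK p z x) := by
  apply Summable.of_nonneg_of_le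
    (fun z => mul_nonneg (hν0 z) (carK_nonneg p hp z x)) _ hνs
  intro z
  calc ν z * carK p z x ≤ ν z * 1 :=
        mul_le_mul_of_nonneg_left (carK_le_one p hp hsum z x) (hν0 z)
    _ = ν z := mul_one _

lemma stat_iter (hp : ∀ i, 0 < p i) (hsum : ∑ i, p i = 1) {ν : (Fin κ → ℕ) → ℝ}
    (hν0 : ∀ m, 0 ≤ ν m) (hνs : Summable ν)
    (hstat : ∀ m', ∑' m, ν m * carK p m m' = ν m') :
    ∀ t m', ∑' m, ν m * carKpow p t m m' = ν m' := by
  intro t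
  induction t with
  | zero =>
      intro m'
      have h0 : ∀ m, ν m * carKpow p 0 m m' = ν m * (if m = m' then 1 else 0) := fun m => rfl
      rw [tsum_congr h0, tsum_eq_single m' (fun b hb => by rw [if_neg hb, mul_zero]),
        if_pos rfl, mul_one]
  | succ t ih =>
      intro m'
      have hnn : ∀ q : (Fin κ → ℕ) × (Fin κ → ℕ),
          0 ≤ ν q.1 * (carKpow p t q.1 q.2 * carK p q.2 m') := fun q =>
        mul_nonneg (hν0 q.1) (mul_nonneg (carKpow_nonneg p hp t _ _) (carK_nonneg p hp _ _))
      have hrow : ∀ m, Summable (fun z => ν m * (carKpow p t m z * carK p z m')) := by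
        intro m
        apply summable_of_ne_finset_zero (s := box m t)
        intro z hz
        rw [carKpow_support p t hz, zero_mul, mul_zero]
      have hmarg : ∀ m, ∑' z, ν m * (carKpow p t m z * carK p z m')
          = ν m * carKpow p (t+1) m m' := by
        intro m
        rw [tsum_mul_left, carKpow_succ]
      have hmargS : Summable (fun m => ∑' z, ν m * (carKpow p t m z * carK p z m')) := by
        rw [show (fun m => ∑' z, ν m * (carKpow p t m z * carK p z m'))
            = fun m => ν m * carKpow p (t+1) m m' from funext hmarg]
        exact summable_mul_K p hp hsum hν0 hνs (t+1) m'
      have hF : Summable (Function.uncurry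
          (fun m z => ν m * (carKpow p t m z * carK p z m'))) :=
        (summable_prod_of_nonneg (fun q => hnn q)).mpr ⟨hrow, hmargS⟩
      have hFswap : Summable (Function.uncurry
          (fun z m => ν m * (carKpow p t m z * carK p z m'))) := by
        have := (Equiv.prodComm (Fin κ → ℕ) (Fin κ → ℕ)).summable_iff.mpr hF
        exact this
      have hcol : ∀ z, Summable (fun m => ν m * (carKpow p t m z * carK p z m')) :=
        ((summable_prod_of_nonneg (fun q => hnn q.swap)).mp hFswap).1
      calc ∑' m, ν m * carKpow p (t+1) m m'
          = ∑' (m) (z), ν m * (carKpow p t m z * carK p z m') :=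
            tsum_congr (fun m => (hmarg m).symm)
        _ = ∑' (z) (m), ν m * (carKpow p t m z * carK p z m') :=
            (Summable.tsum_comm' (f := fun m z => ν m * (carKpow p t m z * carK p z m'))
              hF hrow hcol).symm
        _ = ∑' z, (∑' m, ν m * carKpow p t m z) * carK p z m' := by
            apply tsum_congr
            intro z
            rw [← tsum_mul_right]
            exact tsum_congr (fun m => (mul_assoc _ _ _).symm)
        _ = ∑' z, ν z * carK p z m' := tsum_congr (fun z => by rw [ih z])
        _ = ν m' := hstat m'

lemma stat_pos (hp : ∀ i, 0 < p i) (hsum : ∑ i, p i = 1) {ν : (Fin κ → ℕ) → ℝ}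
    (hν0 : ∀ m, 0 ≤ ν m) (hνs : Summable ν)
    (hstat : ∀ m', ∑' m, ν m * carK p m m' = ν m')
    {m₀ : Fin κ → ℕ} (hm₀ : 0 < ν m₀) : ∀ m', 0 < ν m' := by
  intro m'
  set t := (∑ i, m₀ i) + (∑ i, m' i) with ht
  have hK := carKpow_irred p hp m₀ m' t (le_refl t)
  have h1 : 0 < ν m₀ * carKpow p t m₀ m' := mul_pos hm₀ hK
  have h2 : ν m₀ * carKpow p t m₀ m' ≤ ∑' m, ν m * carKpow p t m m' :=
    Summable.le_tsum (summable_mul_K p hp hsum hν0 hνs t m') m₀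
      (fun m _ => mul_nonneg (hν0 m) (carKpow_nonneg p hp t m m'))
  rw [stat_iter p hp hsum hν0 hνs hstat t m'] at h2
  exact lt_of_lt_of_le h1 h2



theorem stmt14' (κ : ℕ) (p : Fin (κ + 1) → ℝ) (hp : ∀ i, 0 < p i) (hsum : ∑ i, p i = 1)
    (hsub : ∀ i : Fin κ, p i.succ < p 0) :
    (∀ m m' : Fin κ → ℕ, ∃ N : ℕ, ∀ t ≥ N, 0 < carKpow p t m m') ∧
    (∀ m' : Fin κ → ℕ, ∑' m : Fin κ → ℕ, carPi p m * carK p m m' = carPi p m') ∧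
    (∀ π' : (Fin κ → ℕ) → ℝ, (∀ m, 0 ≤ π' m) → (∑' m, π' m = 1) →
      (∀ m' : Fin κ → ℕ, ∑' m : Fin κ → ℕ, π' m * carK p m m' = π' m') →
      π' = carPi p) := by
  classical
  refine ⟨?_, ?_, ?_⟩
  · intro m m'
    exact ⟨(∑ i, m i) + (∑ i, m' i), carKpow_irred p hp m m'⟩
  · exact carPi_stationary p hp hsum hsub
  · intro π' hπ'0 hπ'1 hπ'stat
    obtain ⟨hbS, hb1⟩ := carPi_summable_mass p hp hsub
    have hbpos : ∀ m, 0 < carPi p m := carPi_pos p hp hsub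
    have hb0 : ∀ m, 0 ≤ carPi p m := fun m => (hbpos m).le
    have haS : Summable π' := by
      by_contra hc
      rw [tsum_eq_zero_of_not_summable hc] at hπ'1
      norm_num at hπ'1
    have hbstat := carPi_stationary p hp hsum hsub
    set c : (Fin κ → ℕ) → ℝ := fun x => min (π' x) (carPi p x) with hcdef
    have hc0 : ∀ x, 0 ≤ c x := fun x => le_min (hπ'0 x) (hb0 x)
    have hcle_a : ∀ x, c x ≤ π' x := fun x => min_le_left _ _
    have hcle_b : ∀ x, c x ≤ carPi p x := fun x => min_le_right _ _
    have hcchoice : ∀ x, c x = π' x ∨ c x = carPi p x := fun x => min_choice _ _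
    have hcS : Summable c := Summable.of_nonneg_of_le hc0 hcle_a haS
    have hsum_aK : ∀ x, Summable (fun z => π' z * carK p z x) :=
      summable_mul_K1 p hp hsum hπ'0 haS
    have hsum_bK : ∀ x, Summable (fun z => carPi p z * carK p z x) :=
      summable_mul_K1 p hp hsum hb0 hbS
    have hsum_cK : ∀ x, Summable (fun z => c z * carK p z x) :=
      summable_mul_K1 p hp hsum hc0 hcS
    have hKle_a : ∀ x, (∑' z, c z * carK p z x) ≤ π' x := by
      intro x
      rw [← hπ'stat x]
      exact Summable.tsum_le_tsum
        (fun z => mul_le_mul_of_nonneg_right (hcle_a z) (carK_nonneg p hp z x))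
        (hsum_cK x) (hsum_aK x)
    have hKle_b : ∀ x, (∑' z, c z * carK p z x) ≤ carPi p x := by
      intro x
      rw [← hbstat x]
      exact Summable.tsum_le_tsum
        (fun z => mul_le_mul_of_nonneg_right (hcle_b z) (carK_nonneg p hp z x))
        (hsum_cK x) (hsum_bK x)
    have hcKle : ∀ x, (∑' z, c z * carK p z x) ≤ c x :=
      fun x => le_min (hKle_a x) (hKle_b x)
    -- mass conservation for c, hence stationarity of c
    have hnn : ∀ q : (Fin κ → ℕ) × (Fin κ → ℕ), 0 ≤ c q.1 * carK p q.1 q.2 :=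
      fun q => mul_nonneg (hc0 q.1) (carK_nonneg p hp _ _)
    have hrowf : ∀ z, Summable (fun x => c z * carK p z x) :=
      fun z => (carK_summable p).mul_left _
    have hmargf : ∀ z, (∑' x, c z * carK p z x) = c z := by
      intro z
      rw [tsum_mul_left, carK_row p hsum z, mul_one]
    have hF : Summable (Function.uncurry (fun z x => c z * carK p z x)) := by
      refine (summable_prod_of_nonneg (fun q => hnn q)).mpr ⟨hrowf, ?_⟩
      rw [show (fun z => ∑' x, c z * carK p z x) = c from funext hmargf]
      exact hcS
    have hFswap : Summable (Function.uncurry (fun x z => c z * carK p z x)) := by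
      have := (Equiv.prodComm (Fin κ → ℕ) (Fin κ → ℕ)).summable_iff.mpr hF
      exact this
    have hcKS : Summable (fun x => ∑' z, c z * carK p z x) :=
      ((summable_prod_of_nonneg (fun q => hnn q.swap)).mp hFswap).2
    have hmass : ∑' x, (∑' z, c z * carK p z x) = ∑' x, c x := by
      calc ∑' (x) (z), c z * carK p z x = ∑' (z) (x), c z * carK p z x :=
            Summable.tsum_comm' (f := fun z x => c z * carK p z x) hF hrowf (hsum_cK)
        _ = ∑' x, c x := tsum_congr hmargf
    have hcstat : ∀ x, ∑' z, c z * carK p z x = c x := by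
      intro x
      have hdiff0 : ∑' y, (c y - ∑' z, c z * carK p z y) = 0 := by
        rw [Summable.tsum_sub hcS hcKS, hmass, sub_self]
      have h1 : c x - ∑' z, c z * carK p z x ≤ 0 := by
        rw [← hdiff0]
        exact Summable.le_tsum (hcS.sub hcKS) x (fun y _ => by linarith [hcKle y])
      linarith [hcKle x]
    -- claim A : c = π'
    have claimA : ∀ x, c x = π' x := by
      by_contra hx
      push_neg at hx
      obtain ⟨x₀, hx₀⟩ := hx
      have hlt : c x₀ < π' x₀ := lt_of_le_of_ne (hcle_a x₀) hx₀
      have hν0 : ∀ x, 0 ≤ π' x - c x := fun x => by linarith [hcle_a x]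
      have hνs : Summable (fun x => π' x - c x) := haS.sub hcS
      have hνstat : ∀ x, ∑' z, (π' z - c z) * carK p z x = π' x - c x := by
        intro x
        rw [tsum_congr (fun z => sub_mul (π' z) (c z) (carK p z x)),
          Summable.tsum_sub (hsum_aK x) (hsum_cK x), hπ'stat x, hcstat x]
      have hνpos : ∀ x, 0 < π' x - c x :=
        stat_pos p hp hsum hν0 hνs hνstat (by linarith : 0 < π' x₀ - c x₀)
      have hcb : ∀ x, c x = carPi p x := by
        intro x
        rcases hcchoice x with h | h
        · exfalso; have := hνpos x; linarith
        · exact h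
      have hc1 : ∑' x, c x = 1 := by rw [tsum_congr hcb]; exact hb1
      have hν1 : ∑' x, (π' x - c x) = 0 := by
        rw [Summable.tsum_sub haS hcS, hπ'1, hc1, sub_self]
      have : π' x₀ - c x₀ ≤ 0 := by
        rw [← hν1]
        exact Summable.le_tsum hνs x₀ (fun y _ => (hν0 y))
      linarith
    -- claim B : c = carPi p
    have claimB : ∀ x, c x = carPi p x := by
      by_contra hx
      push_neg at hx
      obtain ⟨x₀, hx₀⟩ := hx
      have hlt : c x₀ < carPi p x₀ := lt_of_le_of_ne (hcle_b x₀) hx₀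
      have hν0 : ∀ x, 0 ≤ carPi p x - c x := fun x => by linarith [hcle_b x]
      have hνs : Summable (fun x => carPi p x - c x) := hbS.sub hcS
      have hνstat : ∀ x, ∑' z, (carPi p z - c z) * carK p z x = carPi p x - c x := by
        intro x
        rw [tsum_congr (fun z => sub_mul (carPi p z) (c z) (carK p z x)),
          Summable.tsum_sub (hsum_bK x) (hsum_cK x), hbstat x, hcstat x]
      have hνpos : ∀ x, 0 < carPi p x - c x :=
        stat_pos p hp hsum hν0 hνs hνstat (by linarith : 0 < carPi p x₀ - c x₀)
      have hca : ∀ x, c x = π' x := by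
        intro x
        rcases hcchoice x with h | h
        · exact h
        · exfalso; have := hνpos x; linarith
      have hc1 : ∑' x, c x = 1 := by rw [tsum_congr hca]; exact hπ'1
      have hν1 : ∑' x, (carPi p x - c x) = 0 := by
        rw [Summable.tsum_sub hbS hcS, hb1, hc1, sub_self]
      have : carPi p x₀ - c x₀ ≤ 0 := by
        rw [← hν1]
        exact Summable.le_tsum hνs x₀ (fun y _ => (hν0 y))
      linarith
    funext x
    rw [← claimA x, claimB x]

end kernel
end S14

/-- In the subcritical regime `p_0 > max(p_1,…,p_κ)`, the multiplicity
chain of the infinite-capacity carrier over the i.i.d. configuration `X^p` is irreducible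
and aperiodic, and the product-geometric distribution `π` is its unique stationary
distribution. -/
theorem stmt14 (κ : ℕ) (p : Fin (κ + 1) → ℝ) (hp : ∀ i, 0 < p i) (hsum : ∑ i, p i = 1)
    (hsub : ∀ i : Fin κ, p i.succ < p 0) :
    (∀ m m' : Fin κ → ℕ, ∃ N : ℕ, ∀ t ≥ N, 0 < carKpow p t m m') ∧
    (∀ m' : Fin κ → ℕ, ∑' m : Fin κ → ℕ, carPi p m * carK p m m' = carPi p m') ∧
    (∀ π' : (Fin κ → ℕ) → ℝ, (∀ m, 0 ≤ π' m) → (∑' m, π' m = 1) →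
      (∀ m' : Fin κ → ℕ, ∑' m : Fin κ → ℕ, π' m * carK p m m' = π' m') →
      π' = carPi p) := by
  exact S14.stmt14' κ p hp hsum hsub
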